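/- Fix reals λ > 0, β > 0, α > 0, λ₁ > 0, t ≥ 0. Define p₀(t) = exp(-λ t (1 - β^α/(λ₁+β)^α)) and, for integers k ≥ 1, p_k(t) = (e^{-λ t}/k!) (λ₁/(λ₁+β))^k Σ_{n=1}^∞ (λ t β^α)^n Γ(α n + k)/((λ₁+β)^{α n} n! Γ(α n)). Then for every real θ with β + λ₁(1 - e^θ) > 0, Σ_{k=0}^∞ e^{θ k} p_k(t) = exp(-λ t (1 - β^α (β + λ₁(1 - e^θ))^{-α})). -/

import Mathlib

open Real MeasureTheory Filter Finset

/-- Wright function `Φ(ρ, δ, z) = Σ_{j≥0} z^j / (j! Γ(ρ j + δ))`. -/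
noncomputable def wright (ρ δ z : ℝ) : ℝ :=
  ∑' j : ℕ, z ^ j / ((Nat.factorial j : ℝ) * Real.Gamma (ρ * (j : ℝ) + δ))

/-- Wright function with second parameter 0:
`Φ(ρ, 0, z) = Σ_{j≥1} z^j / (j! Γ(ρ j))`. -/
noncomputable def wright0 (ρ z : ℝ) : ℝ :=
  ∑' j : ℕ, z ^ (j + 1) /
    ((Nat.factorial (j + 1) : ℝ) * Real.Gamma (ρ * ((j : ℝ) + 1)))

/-- Two-parameter Mittag-Leffler function `E_{ρ,δ}(z) = Σ_{j≥0} z^j / Γ(ρ j + δ)`. -/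
noncomputable def ml2 (ρ δ z : ℝ) : ℝ :=
  ∑' j : ℕ, z ^ j / Real.Gamma (ρ * (j : ℝ) + δ)

/-- Three-parameter generalized Mittag-Leffler function
`E^γ_{ρ,δ}(z) = Σ_{j≥0} (Γ(γ+j)/Γ(γ)) z^j / (j! Γ(ρ j + δ))`. -/
noncomputable def ml3 (γ ρ δ z : ℝ) : ℝ :=
  ∑' j : ℕ, (Real.Gamma (γ + (j : ℝ)) / Real.Gamma γ) * z ^ j /
    ((Nat.factorial j : ℝ) * Real.Gamma (ρ * (j : ℝ) + δ))

/-- Modified Bessel function of the first kind of order 0: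
`I₀(z) = Σ_{j≥0} (z/2)^{2j} / (j!)²`. -/
noncomputable def besselI0 (z : ℝ) : ℝ :=
  ∑' j : ℕ, (z / 2) ^ (2 * j) / ((Nat.factorial j : ℝ) * (Nat.factorial j : ℝ))

open Topology

lemma exp_hasSum (y : ℝ) :
    HasSum (fun n : ℕ => y ^ n / (Nat.factorial n : ℝ)) (Real.exp y) := by
  rw [Real.exp_eq_exp_ℝ]
  exact NormedSpace.expSeries_div_hasSum_exp y

lemma exp_hasSum_shift (y : ℝ) :
    HasSum (fun n : ℕ => y ^ (n + 1) / (Nat.factorial (n + 1) : ℝ)) (Real.exp y - 1) := by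
  rw [hasSum_nat_add_iff (f := fun n : ℕ => y ^ n / (Nat.factorial n : ℝ)) 1]
  simpa using exp_hasSum y

lemma gamma_binomial {s z : ℝ} (hs : 0 < s) (hz0 : 0 < z) (hz1 : z < 1) :
    HasSum (fun k : ℕ => Real.Gamma (s + (k : ℝ)) * z ^ k / (Nat.factorial k : ℝ))
      (Real.Gamma s * (1 - z) ^ (-s)) := by
  set g : ℕ → ℝ := fun k => Real.Gamma (s + (k : ℝ)) * z ^ k / (Nat.factorial k : ℝ) with hg
  have hsk : ∀ k : ℕ, (0:ℝ) < s + k := fun k => by positivity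
  have gpos : ∀ k, 0 < g k := fun k => by
    simp only [hg]
    have := Real.Gamma_pos_of_pos (hsk k)
    positivity
  have hratio : ∀ k : ℕ, g (k + 1) = (s + k) * z / (k + 1) * g k := by
    intro k
    simp only [hg]
    have h1 : Real.Gamma (s + ((k:ℕ)+1 : ℕ)) = (s + k) * Real.Gamma (s + k) := by
      push_cast
      rw [show s + ((k:ℝ) + 1) = (s + k) + 1 by ring, Real.Gamma_add_one (hsk k).ne']
    rw [h1, Nat.factorial_succ]
    have hf : (Nat.factorial k : ℝ) ≠ 0 := Nat.cast_ne_zero.mpr (Nat.factorial_ne_zero k)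
    push_cast
    field_simp
    ring
  have hsum : Summable g := by
    apply summable_of_ratio_test_tendsto_lt_one hz1
      (Filter.Eventually.of_forall fun k => (gpos k).ne')
    have h1 : Tendsto (fun k : ℕ => (1 + (s - 1) * (1 / ((k:ℝ) + 1))) * z) atTop (𝓝 z) := by
      have h2 := ((tendsto_one_div_add_atTop_nhds_zero_nat.const_mul (s - 1)).const_add 1).mul_const z
      simpa using h2
    refine h1.congr fun k => ?_
    rw [Real.norm_of_nonneg (gpos (k+1)).le, Real.norm_of_nonneg (gpos k).le, hratio k,
      mul_div_cancel_right₀ _ (gpos k).ne']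
    have hk1 : ((k:ℝ) + 1) ≠ 0 := by positivity
    have h3 : (1 + (s - 1) * (1 / ((k:ℝ) + 1))) = (s + (k:ℝ)) / ((k:ℝ) + 1) := by
      field_simp
      ring
    rw [h3, div_mul_eq_mul_div]
  -- integral representation
  set F : ℕ → ℝ → ℝ := fun k x => z ^ k / (Nat.factorial k : ℝ) * (Real.exp (-x) * x ^ (s + (k:ℝ) - 1)) with hF
  have h_int : ∀ k : ℕ, IntegrableOn (fun x => Real.exp (-x) * x ^ (s + (k:ℝ) - 1)) (Set.Ioi 0) :=
    fun k => Real.GammaIntegral_convergent (hsk k)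
  have hFint : ∀ k, Integrable (F k) (volume.restrict (Set.Ioi 0)) := by
    intro k
    exact ((h_int k).const_mul _)
  have hFval : ∀ k, ∫ x in Set.Ioi 0, F k x = g k := by
    intro k
    simp only [hF]
    rw [MeasureTheory.integral_const_mul, ← Real.Gamma_eq_integral (hsk k)]
    simp only [hg]; ring
  have h_ae_nonneg : ∀ k, 0 ≤ᵐ[volume.restrict (Set.Ioi 0)] F k := by
    intro k
    filter_upwards [ae_restrict_mem measurableSet_Ioi] with x hx
    have hx0 : (0:ℝ) < x := hx
    have := Real.rpow_pos_of_pos hx0 (s + (k:ℝ) - 1)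
    simp only [hF]
    positivity
  have hval : ∑' k, g k = Real.Gamma s * (1 - z) ^ (-s) := by
    have h1z : (0:ℝ) < 1 - z := by linarith
    calc ∑' k, g k = ∑' k, ∫ x in Set.Ioi 0, F k x := tsum_congr fun k => (hFval k).symm
      _ = ∫ x in Set.Ioi 0, ∑' k, F k x := by
          refine (MeasureTheory.integral_tsum (fun k => (hFint k).aestronglyMeasurable) ?_).symm
          have hlk : ∀ k, ∫⁻ x in Set.Ioi 0, ‖F k x‖ₑ = ENNReal.ofReal (g k) := by
            intro k
            rw [← MeasureTheory.ofReal_integral_norm_eq_lintegral_enorm (hFint k)]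
            congr 1
            rw [← hFval k]
            refine MeasureTheory.integral_congr_ae ?_
            filter_upwards [h_ae_nonneg k] with x hx
            exact Real.norm_of_nonneg hx
          simp only [hlk]
          rw [← ENNReal.ofReal_tsum_of_nonneg (fun k => (gpos k).le) hsum]
          exact ENNReal.ofReal_ne_top
      _ = ∫ x in Set.Ioi 0, x ^ (s - 1) * Real.exp (-((1 - z) * x)) := by
          refine MeasureTheory.setIntegral_congr_fun measurableSet_Ioi fun x hx => ?_
          have hx0 : (0:ℝ) < x := hx
          have hptw : (fun k : ℕ => F k x)
              = fun k : ℕ => (Real.exp (-x) * x ^ (s - 1)) * ((z * x) ^ k / (Nat.factorial k : ℝ)) := by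
            funext k
            have hxp : x ^ (s + (k:ℝ) - 1) = x ^ (s - 1) * x ^ (k:ℕ) := by
              rw [← Real.rpow_natCast x k, ← Real.rpow_add hx0]
              ring_nf
            simp only [hF, hxp, mul_pow]
            ring
          rw [hptw, tsum_mul_left, (exp_hasSum (z * x)).tsum_eq,
            show -((1 - z) * x) = -x + z * x by ring, Real.exp_add]
          ring
      _ = (1 / (1 - z)) ^ s * Real.Gamma s :=
          Real.integral_rpow_mul_exp_neg_mul_Ioi hs h1z
      _ = Real.Gamma s * (1 - z) ^ (-s) := by
          rw [one_div, Real.inv_rpow h1z.le, ← Real.rpow_neg h1z.le, mul_comm]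
  have h := hsum.hasSum
  rwa [hval] at h

lemma gamma_binomial_shift {s z : ℝ} (hs : 0 < s) (hz0 : 0 < z) (hz1 : z < 1) :
    HasSum (fun k : ℕ => Real.Gamma (s + ((k : ℝ) + 1)) * z ^ (k + 1) / (Nat.factorial (k + 1) : ℝ))
      (Real.Gamma s * (1 - z) ^ (-s) - Real.Gamma s) := by
  have key : (fun k : ℕ => Real.Gamma (s + ((k : ℝ) + 1)) * z ^ (k + 1) / (Nat.factorial (k + 1) : ℝ))
      = fun k : ℕ => Real.Gamma (s + ((k + 1 : ℕ) : ℝ)) * z ^ (k + 1) / (Nat.factorial (k + 1) : ℝ) := by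
    funext k; push_cast; ring_nf
  rw [key, hasSum_nat_add_iff
    (f := fun m : ℕ => Real.Gamma (s + (m : ℝ)) * z ^ m / (Nat.factorial m : ℝ)) 1]
  simpa using gamma_binomial hs hz0 hz1

noncomputable def Gaux (α a z : ℝ) (k n : ℕ) : ℝ :=
  z ^ (k + 1) * a ^ (n + 1) * Real.Gamma (α * ((n : ℝ) + 1) + ((k : ℝ) + 1)) /
    ((Nat.factorial (k + 1) : ℝ) * (Nat.factorial (n + 1) : ℝ) *
      Real.Gamma (α * ((n : ℝ) + 1)))

lemma Gaux_nonneg {α a z : ℝ} (hα : 0 < α) (ha : 0 ≤ a) (hz0 : 0 < z) (k n : ℕ) :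
    0 ≤ Gaux α a z k n := by
  unfold Gaux
  have h1 : 0 < Real.Gamma (α * ((n : ℝ) + 1)) :=
    Real.Gamma_pos_of_pos (by positivity)
  have h2 : 0 < Real.Gamma (α * ((n : ℝ) + 1) + ((k : ℝ) + 1)) :=
    Real.Gamma_pos_of_pos (by positivity)
  positivity

lemma Gaux_hasSum_k {α a z : ℝ} (hα : 0 < α) (ha : 0 ≤ a) (hz0 : 0 < z) (hz1 : z < 1)
    (n : ℕ) :
    HasSum (fun k => Gaux α a z k n)
      (((a * (1 - z) ^ (-α)) ^ (n + 1) - a ^ (n + 1)) / (Nat.factorial (n + 1) : ℝ)) := by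
  have h1z : (0:ℝ) < 1 - z := by linarith
  have hsn : 0 < α * ((n : ℝ) + 1) := by positivity
  have hΓ : 0 < Real.Gamma (α * ((n : ℝ) + 1)) := Real.Gamma_pos_of_pos hsn
  have hfn : (0:ℝ) < (Nat.factorial (n + 1) : ℝ) := by positivity
  have hc := (gamma_binomial_shift hsn hz0 hz1).mul_left
    (a ^ (n + 1) / ((Nat.factorial (n + 1) : ℝ) * Real.Gamma (α * ((n : ℝ) + 1))))
  have hfun : (fun k : ℕ => a ^ (n + 1) / ((Nat.factorial (n + 1) : ℝ) *
        Real.Gamma (α * ((n : ℝ) + 1))) *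
        (Real.Gamma (α * ((n : ℝ) + 1) + ((k : ℝ) + 1)) * z ^ (k + 1) /
          (Nat.factorial (k + 1) : ℝ)))
      = fun k => Gaux α a z k n := by
    funext k
    unfold Gaux
    have hfk : (0:ℝ) < (Nat.factorial (k + 1) : ℝ) := by positivity
    field_simp
  have hwn : (1 - z) ^ (-(α * ((n : ℝ) + 1))) = ((1 - z) ^ (-α)) ^ (n + 1) := by
    rw [← Real.rpow_natCast ((1 - z) ^ (-α)) (n + 1), ← Real.rpow_mul h1z.le]
    congr 1
    push_cast
    ring
  have hval : a ^ (n + 1) / ((Nat.factorial (n + 1) : ℝ) * Real.Gamma (α * ((n : ℝ) + 1))) *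
      (Real.Gamma (α * ((n : ℝ) + 1)) * (1 - z) ^ (-(α * ((n : ℝ) + 1))) -
        Real.Gamma (α * ((n : ℝ) + 1)))
      = ((a * (1 - z) ^ (-α)) ^ (n + 1) - a ^ (n + 1)) / (Nat.factorial (n + 1) : ℝ) := by
    rw [hwn, mul_pow]
    field_simp
  rw [hfun, hval] at hc
  exact hc

lemma Gaux_double {α a z : ℝ} (hα : 0 < α) (ha : 0 ≤ a) (hz0 : 0 < z) (hz1 : z < 1) :
    Summable (fun k : ℕ => ∑' n : ℕ, Gaux α a z k n) ∧
      ∑' k : ℕ, ∑' n : ℕ, Gaux α a z k n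
        = Real.exp (a * (1 - z) ^ (-α)) - Real.exp a := by
  have hT : HasSum (fun n : ℕ =>
      ((a * (1 - z) ^ (-α)) ^ (n + 1) - a ^ (n + 1)) / (Nat.factorial (n + 1) : ℝ))
      (Real.exp (a * (1 - z) ^ (-α)) - Real.exp a) := by
    have h := (exp_hasSum_shift (a * (1 - z) ^ (-α))).sub (exp_hasSum_shift a)
    simpa only [sub_div, sub_sub_sub_cancel_right] using h
  have hGsum : Summable (fun q : ℕ × ℕ => Gaux α a z q.2 q.1) := by
    refine (summable_prod_of_nonneg ?_).mpr ⟨fun n => (Gaux_hasSum_k hα ha hz0 hz1 n).summable,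
      hT.summable.congr fun n => ((Gaux_hasSum_k hα ha hz0 hz1 n).tsum_eq).symm⟩
    intro q
    exact Gaux_nonneg hα ha hz0 q.2 q.1
  constructor
  · exact hGsum.prod_symm.prod
  · calc ∑' k, ∑' n, Gaux α a z k n
        = ∑' n, ∑' k, Gaux α a z k n :=
          Summable.tsum_comm' hGsum (fun n => (Gaux_hasSum_k hα ha hz0 hz1 n).summable)
            (fun k => hGsum.prod_symm.prod_factor k)
      _ = ∑' n, ((a * (1 - z) ^ (-α)) ^ (n + 1) - a ^ (n + 1)) / (Nat.factorial (n + 1) : ℝ) :=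
          tsum_congr fun n => (Gaux_hasSum_k hα ha hz0 hz1 n).tsum_eq
      _ = Real.exp (a * (1 - z) ^ (-α)) - Real.exp a := hT.tsum_eq

/-- moment generating function of a Poisson process time-changed
by a compound Poisson–Gamma subordinator. -/
theorem stmt12 (lam β α lam1 t : ℝ) (hlam : 0 < lam) (hβ : 0 < β) (hα : 0 < α)
    (hlam1 : 0 < lam1) (ht : 0 ≤ t) (p : ℕ → ℝ → ℝ)
    (hp0 : ∀ s : ℝ, p 0 s = Real.exp (-(lam * s) * (1 - β ^ α / (lam1 + β) ^ α)))
    (hpk : ∀ k : ℕ, 1 ≤ k → ∀ s : ℝ,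
      p k s = (Real.exp (-(lam * s)) / (Nat.factorial k : ℝ)) *
        (lam1 / (lam1 + β)) ^ k *
        ∑' n : ℕ, (lam * s * β ^ α) ^ (n + 1) *
            Real.Gamma (α * ((n : ℝ) + 1) + (k : ℝ)) /
          ((lam1 + β) ^ (α * ((n : ℝ) + 1)) * (Nat.factorial (n + 1) : ℝ) *
            Real.Gamma (α * ((n : ℝ) + 1)))) :
    ∀ θ : ℝ, 0 < β + lam1 * (1 - Real.exp θ) →
      (∑' k : ℕ, Real.exp (θ * (k : ℝ)) * p k t)
        = Real.exp (-(lam * t) *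
            (1 - β ^ α * (β + lam1 * (1 - Real.exp θ)) ^ (-α))) := by
  intro θ hθ
  have hE : 0 < Real.exp θ := Real.exp_pos θ
  have hD : 0 < lam1 + β := by linarith
  have hDα : 0 < (lam1 + β) ^ α := Real.rpow_pos_of_pos hD α
  have hβα : 0 < β ^ α := Real.rpow_pos_of_pos hβ α
  set E := Real.exp θ with hEdef
  set z := lam1 * E / (lam1 + β) with hzdef
  have hz0 : 0 < z := by positivity
  have hzlt : lam1 * E < lam1 + β := by nlinarith [hθ]
  have hz1 : z < 1 := (div_lt_one hD).mpr hzlt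
  have h1z : 0 < 1 - z := by linarith
  set a := lam * t * β ^ α / (lam1 + β) ^ α with hadef
  have ha : 0 ≤ a := by positivity
  set P := β + lam1 * (1 - E) with hPdef
  have h1z_eq : (1 : ℝ) - z = P / (lam1 + β) := by
    rw [hzdef, hPdef]; field_simp; ring
  have haw : a * (1 - z) ^ (-α) = lam * t * β ^ α * P ^ (-α) := by
    rw [h1z_eq, Real.div_rpow hθ.le hD.le, Real.rpow_neg hD.le α, hadef]
    field_simp
  set C := Real.exp (-(lam * t)) with hCdef
  -- step: identify the shifted terms with Gaux
  have hf1 : ∀ k : ℕ, Real.exp (θ * ((k + 1 : ℕ) : ℝ)) * p (k + 1) t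
      = C * ∑' n : ℕ, Gaux α a z k n := by
    intro k
    rw [hpk (k + 1) (Nat.le_add_left 1 k) t, ← mul_assoc, ← tsum_mul_left, ← tsum_mul_left]
    refine tsum_congr fun n => ?_
    have hDexp : (lam1 + β) ^ (α * ((n : ℝ) + 1)) = ((lam1 + β) ^ α) ^ (n + 1) := by
      rw [← Real.rpow_natCast ((lam1 + β) ^ α) (n + 1), ← Real.rpow_mul hD.le]
      congr 1
      push_cast
      ring
    have hexpk : Real.exp (θ * ((k + 1 : ℕ) : ℝ)) = E ^ (k + 1) := by
      rw [mul_comm, Real.exp_nat_mul, hEdef]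
    have hΓ : 0 < Real.Gamma (α * ((n : ℝ) + 1)) :=
      Real.Gamma_pos_of_pos (by positivity)
    have hfk : (0:ℝ) < (Nat.factorial (k + 1) : ℝ) := by positivity
    have hfn : (0:ℝ) < (Nat.factorial (n + 1) : ℝ) := by positivity
    rw [hexpk, hDexp]
    unfold Gaux
    rw [hadef, hzdef]
    push_cast
    rw [hCdef]
    have hDα' := hDα.ne'
    field_simp
    rw [div_pow (lam * t * β ^ α)]
    field_simp
    ring
  obtain ⟨hKsum, hKval⟩ := Gaux_double (a := a) (z := z) hα ha hz0 hz1
  have hsum_shift : Summable (fun k : ℕ => Real.exp (θ * ((k + 1 : ℕ) : ℝ)) * p (k + 1) t) :=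
    (hKsum.mul_left C).congr fun k => (hf1 k).symm
  have hfull : Summable (fun k : ℕ => Real.exp (θ * (k : ℝ)) * p k t) := by
    rw [← summable_nat_add_iff 1]
    exact hsum_shift
  have hp0' : p 0 t = C * Real.exp a := by
    rw [hp0 t, show -(lam * t) * (1 - β ^ α / (lam1 + β) ^ α) = -(lam * t) + a by
      rw [hadef]; ring, Real.exp_add, hCdef]
  calc (∑' k : ℕ, Real.exp (θ * (k : ℝ)) * p k t)
      = Real.exp (θ * ((0 : ℕ) : ℝ)) * p 0 t
        + ∑' k : ℕ, Real.exp (θ * ((k + 1 : ℕ) : ℝ)) * p (k + 1) t :=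
        Summable.tsum_eq_zero_add hfull
    _ = C * Real.exp a + C * (Real.exp (a * (1 - z) ^ (-α)) - Real.exp a) := by
        rw [Nat.cast_zero, mul_zero, Real.exp_zero, one_mul, hp0']
        congr 1
        rw [tsum_congr hf1, tsum_mul_left, hKval]
    _ = C * Real.exp (a * (1 - z) ^ (-α)) := by ring
    _ = Real.exp (-(lam * t) * (1 - β ^ α * P ^ (-α))) := by
        rw [haw, hCdef, ← Real.exp_add]
        congr 1
        ring
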